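/- arXiv:1912.05757 — 3 statements merged into one kernel-verified Lean document; each statement's English description precedes it below -/
import Mathlib

section
/- For a prime p and integers k ≥ 1, the multinomial coefficient (kp)!/((p!)^k · k!) is an integer congruent to 1 modulo p. -/
lemma aux_choose_one_mod (p m : ℕ) (hp : p.Prime) :
    Nat.choose (m * p + p - 1) (p - 1) % p = 1 := by
  haveI : Fact p.Prime := ⟨hp⟩
  have hp1 : 1 ≤ p := hp.one_lt.le
  have h := Choose.choose_modEq_choose_mod_mul_choose_div_nat
    (n := m * p + p - 1) (k := p - 1) (p := p)
  have hn : m * p + p - 1 = (p - 1) + m * p := by omega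
  have hlt : p - 1 < p := by omega
  rw [hn] at h ⊢
  rw [Nat.add_mul_mod_self_right, Nat.add_mul_div_right _ _ hp.pos,
    Nat.mod_eq_of_lt hlt, Nat.div_eq_of_lt hlt] at h
  simp only [Nat.zero_add, Nat.choose_self, Nat.choose_zero_right, one_mul, mul_one] at h
  unfold Nat.ModEq at h
  rw [h, Nat.mod_eq_of_lt hp.one_lt]

lemma aux_bell_mod (p : ℕ) (hp : p.Prime) : ∀ m, Nat.uniformBell m p % p = 1 := by
  intro m
  induction m with
  | zero => rw [Nat.uniformBell_zero_left, Nat.mod_eq_of_lt hp.one_lt]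
  | succ m ih =>
      rw [Nat.uniformBell_succ_left, Nat.mul_mod, ih, aux_choose_one_mod p m hp,
        mul_one, Nat.mod_eq_of_lt hp.one_lt]

/-- For a prime `p` and an integer `k ≥ 1`, the multinomial coefficient
`(kp)! / ((p!)^k * k!)` is an integer (i.e. `(p!)^k * k!` divides `(kp)!`)
congruent to `1` modulo `p`. -/
theorem multinomial_blocks_integer_and_one_mod_p (p k : ℕ) (hp : p.Prime) (hk : 1 ≤ k) :
    (Nat.factorial p ^ k * Nat.factorial k) ∣ Nat.factorial (k * p) ∧
      (Nat.factorial (k * p) / (Nat.factorial p ^ k * Nat.factorial k)) % p = 1 := by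
  have hmul := Nat.uniformBell_mul_eq k (n := p) hp.pos.ne'
  have heq : Nat.factorial (k * p) = Nat.uniformBell k p * (Nat.factorial p ^ k * Nat.factorial k) := by
    rw [← hmul]; ring
  constructor
  · exact ⟨Nat.uniformBell k p, by rw [heq]; ring⟩
  · rw [heq, Nat.mul_div_cancel _ (by positivity)]
    exact aux_bell_mod p hp k
end

section
/- Let R be a commutative ring of characteristic p (p prime) and D a derivation of R. Then the p-fold iterate D^p (composition of D with itself p times) is again a derivation of R. -/
/-- General Leibniz rule for iterates of a derivation. -/
theorem iterate_leibniz_aux {R : Type*} [CommRing R] (D : R → R)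
    (hadd : ∀ a b : R, D (a + b) = D a + D b)
    (hmul : ∀ a b : R, D (a * b) = a * D b + D a * b) (n : ℕ) (a b : R) :
    D^[n] (a * b) = ∑ k ∈ Finset.range (n + 1),
      n.choose k • (D^[k] a * D^[n - k] b) := by
  set f : R →+ R := AddMonoidHom.mk' D hadd with hf
  have hfD : ∀ x, f x = D x := fun _ => rfl
  induction n with
  | zero => simp
  | succ n ih =>
    rw [Function.iterate_succ_apply', ih, ← hfD, map_sum]
    have hterm : ∀ k, f (n.choose k • (D^[k] a * D^[n - k] b)) =
        n.choose k • (D^[k] a * D^[n - k + 1] b)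
        + n.choose k • (D^[k + 1] a * D^[n - k] b) := by
      intro k
      rw [map_nsmul, hfD, hmul, smul_add, ← Function.iterate_succ_apply' D,
        ← Function.iterate_succ_apply' D]
    simp only [hterm]
    rw [Finset.sum_add_distrib]
    have h1 : ∑ k ∈ Finset.range (n + 1), n.choose k • (D^[k] a * D^[n - k + 1] b)
        = ∑ k ∈ Finset.range (n + 1), n.choose k • (D^[k] a * D^[n + 1 - k] b) := by
      apply Finset.sum_congr rfl
      intro k hk
      rw [Finset.mem_range] at hk
      rw [Nat.succ_sub (by omega)]
    have h2 : ∑ k ∈ Finset.range (n + 1), n.choose k • (D^[k + 1] a * D^[n - k] b)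
        = ∑ k ∈ Finset.range (n + 1), n.choose k • (D^[k + 1] a * D^[n + 1 - (k + 1)] b) := by
      simp
    rw [h1, h2]
    -- now combine via Pascal's rule
    rw [Finset.sum_range_succ' (f := fun k => n.choose k • (D^[k] a * D^[n + 1 - k] b)),
      Finset.sum_range_succ (f := fun k => n.choose k • (D^[k + 1] a * D^[n + 1 - (k + 1)] b)),
      Finset.sum_range_succ (f := fun k => (n + 1).choose k • (D^[k] a * D^[n + 1 - k] b)),
      Finset.sum_range_succ' (f := fun k => (n + 1).choose k • (D^[k] a * D^[n + 1 - k] b))]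
    simp only [Nat.choose_self, Nat.choose_zero_right, Nat.choose_succ_succ', add_smul,
      Finset.sum_add_distrib, Nat.sub_zero, Nat.sub_self, Nat.add_sub_cancel,
      Nat.add_sub_cancel_left]
    ring

/-- Let `R` be a commutative ring of characteristic `p` (`p` prime) and `D` a derivation
of `R`, i.e. an additive map satisfying the Leibniz rule.  Then the `p`-fold iterate
`D^[p]` is again a derivation of `R`. -/
theorem iterate_p_of_derivation_is_derivation (p : ℕ) (hp : p.Prime) (R : Type*)
    [CommRing R] [CharP R p] (D : R → R)
    (hadd : ∀ a b : R, D (a + b) = D a + D b)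
    (hmul : ∀ a b : R, D (a * b) = a * D b + D a * b) :
    (∀ a b : R, D^[p] (a + b) = D^[p] a + D^[p] b) ∧
      (∀ a b : R, D^[p] (a * b) = a * D^[p] b + D^[p] a * b) := by
  constructor
  · intro a b
    clear hp
    induction p with
    | zero => simp
    | succ n ih =>
      rw [Function.iterate_succ_apply', Function.iterate_succ_apply',
        Function.iterate_succ_apply', ih, hadd]
  · intro a b
    rw [iterate_leibniz_aux D hadd hmul p a b]
    have hp2 : 2 ≤ p := hp.two_le
    obtain ⟨q, hq⟩ : ∃ q, p = q + 1 := ⟨p - 1, by omega⟩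
    rw [Finset.sum_range_succ]
    rw [show Finset.range p = Finset.range (q + 1) from by rw [hq],
      Finset.sum_range_succ']
    have hmid : ∀ k ∈ Finset.range q,
        p.choose (k + 1) • (D^[k + 1] a * D^[p - (k + 1)] b) = 0 := by
      intro k hk
      rw [Finset.mem_range] at hk
      have hdvd : p ∣ p.choose (k + 1) :=
        hp.dvd_choose_self (by omega) (by omega)
      rw [nsmul_eq_mul, show ((p.choose (k + 1) : R)) = 0 from
        (CharP.cast_eq_zero_iff R p _).2 hdvd, zero_mul]
    rw [Finset.sum_eq_zero hmid]
    simp [add_comm]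
end

section
/- Let p be prime and (A, J, γ) a divided power algebra over a ring of characteristic p. Write any n ≥ 0 in base p as n = a_0 + a_1 p + ... + a_k p^k with 0 ≤ a_i < p. Then for x ∈ J, γ_n(x) = u · γ_1(x)^{a_0} · γ_p(x)^{a_1} · ... · γ_{p^k}(x)^{a_k} for some unit u in Z/p (i.e., the two sides differ by a nonzero scalar in F_p ⊂ A). -/
open Nat Finset

private lemma no_carry_not_dvd {p : ℕ} (hp : p.Prime) {m l : ℕ}
    (h : ∀ t, 1 ≤ t → l % p ^ t + m % p ^ t < p ^ t) :
    ¬ p ∣ (m + l).choose l := by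
  rw [← emultiplicity_eq_zero,
    Nat.Prime.emultiplicity_choose' hp (Nat.lt_succ_self (Nat.log p (m + l)))]
  have he : {i ∈ Finset.Ico 1 (Nat.log p (m + l) + 1) |
      p ^ i ≤ l % p ^ i + m % p ^ i} = ∅ :=
    Finset.filter_false_of_mem fun i hi =>
      not_le.mpr (h i (Finset.mem_Ico.mp hi).1)
  rw [he]
  simp

private lemma step1_not_dvd {p : ℕ} (hp : p.Prime) (i j : ℕ) (hj : j + 1 < p) :
    ¬ p ∣ (j * p ^ i + p ^ i).choose (p ^ i) := by
  apply no_carry_not_dvd hp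
  intro t ht
  rcases le_or_gt t i with h | h
  · have h1 : p ^ i % p ^ t = 0 := Nat.dvd_iff_mod_eq_zero.mp (pow_dvd_pow p h)
    have h2 : j * p ^ i % p ^ t = 0 :=
      Nat.dvd_iff_mod_eq_zero.mp (Dvd.dvd.mul_left (pow_dvd_pow p h) j)
    rw [h1, h2]
    exact pow_pos hp.pos t
  · calc p ^ i % p ^ t + j * p ^ i % p ^ t ≤ p ^ i + j * p ^ i :=
        Nat.add_le_add (Nat.mod_le _ _) (Nat.mod_le _ _)
      _ = (j + 1) * p ^ i := by ring
      _ < p * p ^ i := Nat.mul_lt_mul_of_lt_of_le hj le_rfl (pow_pos hp.pos i)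
      _ = p ^ (i + 1) := by ring
      _ ≤ p ^ t := Nat.pow_le_pow_right hp.pos h

private lemma step2_not_dvd {p : ℕ} (hp : p.Prime) {k S b : ℕ}
    (hS : S < p ^ (k + 1)) (hb : b < p) :
    ¬ p ∣ (b * p ^ (k + 1) + S).choose S := by
  apply no_carry_not_dvd hp
  intro t ht
  rcases le_or_gt t (k + 1) with h | h
  · have h2 : b * p ^ (k + 1) % p ^ t = 0 :=
      Nat.dvd_iff_mod_eq_zero.mp (Dvd.dvd.mul_left (pow_dvd_pow p h) b)
    rw [h2, Nat.add_zero]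
    exact Nat.mod_lt _ (pow_pos hp.pos t)
  · calc S % p ^ t + b * p ^ (k + 1) % p ^ t ≤ S + b * p ^ (k + 1) :=
        Nat.add_le_add (Nat.mod_le _ _) (Nat.mod_le _ _)
      _ < p ^ (k + 1) + b * p ^ (k + 1) := by omega
      _ = (b + 1) * p ^ (k + 1) := by ring
      _ ≤ p * p ^ (k + 1) := Nat.mul_le_mul_right _ hb
      _ = p ^ (k + 2) := by ring
      _ ≤ p ^ t := Nat.pow_le_pow_right hp.pos h

private lemma dpow_pow_eq {p : ℕ} (hp : p.Prime) {A : Type*} [CommRing A]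
    {J : Ideal A} (γ : DividedPowers J) {x : A} (hx : x ∈ J) (i : ℕ) :
    ∀ a : ℕ, a < p → ∃ C : ℕ, ¬ p ∣ C ∧
      γ.dpow (p ^ i) x ^ a = (C : A) * γ.dpow (a * p ^ i) x := by
  intro a
  induction a with
  | zero =>
    intro _
    refine ⟨1, by simp [Nat.dvd_one, hp.ne_one], ?_⟩
    rw [pow_zero, Nat.zero_mul, γ.dpow_zero hx, Nat.cast_one, mul_one]
  | succ j ih =>
    intro hj
    obtain ⟨C, hC, hCeq⟩ := ih (Nat.lt_of_succ_lt hj)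
    refine ⟨C * ((j * p ^ i + p ^ i).choose (j * p ^ i)), ?_, ?_⟩
    · have hsymm : (j * p ^ i + p ^ i).choose (j * p ^ i)
          = (j * p ^ i + p ^ i).choose (p ^ i) := by
        have h := Nat.choose_symm (Nat.le_add_left (p ^ i) (j * p ^ i))
        rwa [Nat.add_sub_cancel] at h
      rw [hsymm]
      intro hdvd
      rcases (Nat.Prime.dvd_mul hp).mp hdvd with h | h
      · exact hC h
      · exact step1_not_dvd hp i j hj h
    · rw [pow_succ, hCeq, mul_assoc, γ.mul_dpow hx, Nat.succ_mul, Nat.cast_mul]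
      ring

private lemma digit_sum_lt {p : ℕ} (hp : 0 < p) (a : ℕ → ℕ) (ha : ∀ i, a i < p) :
    ∀ m : ℕ, ∑ i ∈ Finset.range m, a i * p ^ i < p ^ m := by
  intro m
  induction m with
  | zero => simp
  | succ m ih =>
    rw [Finset.sum_range_succ]
    calc ∑ i ∈ Finset.range m, a i * p ^ i + a m * p ^ m
        < p ^ m + a m * p ^ m := by omega
      _ = (a m + 1) * p ^ m := by ring
      _ ≤ p * p ^ m := Nat.mul_le_mul_right _ (ha m)
      _ = p ^ (m + 1) := by rw [pow_succ, mul_comm]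

private lemma prod_dpow_eq {p : ℕ} (hp : p.Prime) {A : Type*} [CommRing A]
    {J : Ideal A} (γ : DividedPowers J) {x : A} (hx : x ∈ J)
    (a : ℕ → ℕ) (ha : ∀ i, a i < p) :
    ∀ k : ℕ, ∃ C : ℕ, ¬ p ∣ C ∧
      ∏ i ∈ Finset.range (k + 1), γ.dpow (p ^ i) x ^ a i
        = (C : A) * γ.dpow (∑ i ∈ Finset.range (k + 1), a i * p ^ i) x := by
  intro k
  induction k with
  | zero =>
    obtain ⟨C, hC, hCeq⟩ := dpow_pow_eq hp γ hx 0 (a 0) (ha 0)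
    exact ⟨C, hC, by simpa using hCeq⟩
  | succ k ih =>
    obtain ⟨C, hC, hCeq⟩ := ih
    obtain ⟨C', hC', hC'eq⟩ := dpow_pow_eq hp γ hx (k + 1) (a (k + 1)) (ha (k + 1))
    set S := ∑ i ∈ Finset.range (k + 1), a i * p ^ i with hSdef
    set m := a (k + 1) * p ^ (k + 1) with hmdef
    refine ⟨C * C' * ((S + m).choose S), ?_, ?_⟩
    · intro hdvd
      rcases (Nat.Prime.dvd_mul hp).mp hdvd with h | h
      · rcases (Nat.Prime.dvd_mul hp).mp h with h' | h'
        · exact hC h'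
        · exact hC' h'
      · rw [Nat.add_comm S m] at h
        exact step2_not_dvd hp (digit_sum_lt hp.pos a ha (k + 1)) (ha (k + 1)) h
    · rw [Finset.prod_range_succ, Finset.sum_range_succ, hCeq, hC'eq, ← hSdef, ← hmdef]
      rw [show (C : A) * γ.dpow S x * ((C' : A) * γ.dpow m x)
          = (C : A) * (C' : A) * (γ.dpow S x * γ.dpow m x) by ring,
        γ.mul_dpow (m := S) (n := m) hx]
      push_cast
      ring

/-- Let `p` be prime and `(A, J, γ)` a divided power algebra over a ring of
characteristic `p`.  Write `n = a_0 + a_1 p + ⋯ + a_k p^k` in base `p`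
(so `0 ≤ a_i < p`).  Then for `x ∈ J`,
`γ_n(x) = u · γ_1(x)^{a_0} · γ_p(x)^{a_1} ⋯ γ_{p^k}(x)^{a_k}` for some unit `u` of
`F_p`, i.e. a natural number `u` not divisible by `p`. -/
theorem dpow_eq_unit_mul_prod_dpow_pow (p : ℕ) (hp : p.Prime) {A : Type*} [CommRing A]
    [CharP A p] {J : Ideal A} (γ : DividedPowers J) (x : A) (hx : x ∈ J)
    (n k : ℕ) (a : ℕ → ℕ) (ha : ∀ i, a i < p)
    (hn : n = ∑ i ∈ Finset.range (k + 1), a i * p ^ i) :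
    ∃ u : ℕ, ¬ p ∣ u ∧
      γ.dpow n x = (u : A) * ∏ i ∈ Finset.range (k + 1), γ.dpow (p ^ i) x ^ a i := by
  haveI : Fact p.Prime := ⟨hp⟩
  obtain ⟨C, hC, hCeq⟩ := prod_dpow_eq hp γ hx a ha k
  rw [← hn] at hCeq
  have hCz : (C : ZMod p) ≠ 0 := fun h =>
    hC ((ZMod.natCast_eq_zero_iff C p).mp h)
  refine ⟨((C : ZMod p)⁻¹).val, ?_, ?_⟩
  · intro hdvd
    have h0 : ((((C : ZMod p)⁻¹).val : ℕ) : ZMod p) = 0 :=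
      (ZMod.natCast_eq_zero_iff _ p).mpr hdvd
    rw [ZMod.natCast_val, ZMod.cast_id] at h0
    exact hCz (inv_eq_zero.mp h0)
  · have key : ((((C : ZMod p)⁻¹).val * C : ℕ) : A) = 1 := by
      have h1 : ((((C : ZMod p)⁻¹).val * C : ℕ) : ZMod p) = 1 := by
        push_cast
        rw [ZMod.natCast_val, ZMod.cast_id, inv_mul_cancel₀ hCz]
      calc ((((C : ZMod p)⁻¹).val * C : ℕ) : A)
          = ZMod.castHom (dvd_refl p) A ((((C : ZMod p)⁻¹).val * C : ℕ) : ZMod p) := by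
            rw [map_natCast]
        _ = 1 := by rw [h1, map_one]
    rw [hCeq, ← mul_assoc, ← Nat.cast_mul, key, one_mul]
end
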